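/- Let S:[0,T]→ℝ be continuous and satisfy: for every s ∈ [0,T), inf{t>s : S_t > S_s} = s whenever S is not eventually below S_s, in the two-way crossing sense. If Ŝ is constant on a nondegenerate interval [σ,τ] (σ<τ) with (1-κ)S_t ≤ Ŝ_t ≤ (1+κ)S_t for all t and κ∈(0,1), and S crosses both up and down immediately after σ (i.e., for every δ>0 there exist t₁,t₂ ∈ (σ,σ+δ) with S_{t₁} > S_σ and S_{t₂} < S_σ), then (1-κ)S_σ < Ŝ_σ < (1+κ)S_σ. -/
import Mathlib


open Set

/-- **The shadow price stays strictly inside the bid–ask spread** (pathwise core of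
Step II of Proposition 2.1).  Let `S > 0` be continuous, `κ ∈ (0,1)`, and let `Ŝ` with
`(1-κ)S ≤ Ŝ ≤ (1+κ)S` be constant on a nondegenerate interval `[σ,τ]`.  If `S` crosses
both up and down immediately after `σ`, then `(1-κ)S_σ < Ŝ_σ < (1+κ)S_σ`. -/
theorem stmt19 (κ σ τ : ℝ) (hκ : κ ∈ Set.Ioo (0:ℝ) 1) (hστ : σ < τ)
    (S Shat : ℝ → ℝ)
    (hScont : Continuous S) (hSpos : ∀ t, 0 < S t)
    (hbid : ∀ t, (1 - κ) * S t ≤ Shat t)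
    (hask : ∀ t, Shat t ≤ (1 + κ) * S t)
    (hconst : ∀ t ∈ Set.Icc σ τ, Shat t = Shat σ)
    (hcross : ∀ δ : ℝ, 0 < δ →
      (∃ t₁ ∈ Set.Ioo σ (σ + δ), S σ < S t₁) ∧
      (∃ t₂ ∈ Set.Ioo σ (σ + δ), S t₂ < S σ)) :
    (1 - κ) * S σ < Shat σ ∧ Shat σ < (1 + κ) * S σ := by
  obtain ⟨hκ0, hκ1⟩ := hκ
  obtain ⟨⟨t₁, ht₁m, ht₁⟩, ⟨t₂, ht₂m, ht₂⟩⟩ := hcross (τ - σ) (by linarith)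
  have hm : σ + (τ - σ) = τ := by ring
  rw [hm] at ht₁m ht₂m
  have hc1 : Shat t₁ = Shat σ := hconst t₁ ⟨ht₁m.1.le, ht₁m.2.le⟩
  have hc2 : Shat t₂ = Shat σ := hconst t₂ ⟨ht₂m.1.le, ht₂m.2.le⟩
  constructor
  · have h := hbid t₁
    rw [hc1] at h
    nlinarith
  · have h := hask t₂
    rw [hc2] at h
    nlinarith
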